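/- The space S₄ is of the first category in itself (i.e., S₄ is the union of countably many subsets that are nowhere dense in S₄) and is strongly homogeneous: any two nonempty clopen subsets of S₄ are homeomorphic. -/

import Mathlib

open TopologicalSpace Filter Set

/-- `𝒜_n(X) = {A ∈ 𝒦(X) : 1 ≤ |A'| ≤ n}` where `A'` is the derived set of `A` in `X`. -/
def An (X : Type*) [MetricSpace X] (n : ℕ) : Set (NonemptyCompacts X) :=
  {A | 1 ≤ (derivedSet (A : Set X)).ncard ∧ (derivedSet (A : Set X)).ncard ≤ n}

/-- `𝒜_n(X,F) = {A ∈ 𝒜_n(X) : A' ⊆ F}`. -/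
def AnF (X : Type*) [MetricSpace X] (n : ℕ) (F : Set X) : Set (NonemptyCompacts X) :=
  {A | A ∈ An X n ∧ derivedSet (A : Set X) ⊆ F}

/-- `𝒜_ω(X) = {A ∈ 𝒦(X) : A' is nonempty and finite}`. -/
def Aom (X : Type*) [MetricSpace X] : Set (NonemptyCompacts X) :=
  {A | (derivedSet (A : Set X)).Nonempty ∧ (derivedSet (A : Set X)).Finite}

/-- `𝒜_ω(X,F) = {A ∈ 𝒜_ω(X) : A' ⊆ F}`. -/
def AomF (X : Type*) [MetricSpace X] (F : Set X) : Set (NonemptyCompacts X) :=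
  {A | A ∈ Aom X ∧ derivedSet (A : Set X) ⊆ F}

/-- `𝒜_{ω+1}(X) = {A ∈ 𝒦(X) : A' is nonempty and countable}`. -/
def Aom1 (X : Type*) [MetricSpace X] : Set (NonemptyCompacts X) :=
  {A | (derivedSet (A : Set X)).Nonempty ∧ (derivedSet (A : Set X)).Countable}

/-- `ℋ(X) = {A ∈ 𝒦(X) : A countable}`. -/
def HH (X : Type*) [MetricSpace X] : Set (NonemptyCompacts X) :=
  {A | (A : Set X).Countable}

/-- F_σ set: a countable union of closed sets. -/
def IsFsigma {Y : Type*} [TopologicalSpace Y] (S : Set Y) : Prop :=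
  ∃ f : ℕ → Set Y, (∀ i, IsClosed (f i)) ∧ S = ⋃ i, f i

/-- F_σδ set: a countable intersection of F_σ sets. -/
def IsFsigmaDelta {Y : Type*} [TopologicalSpace Y] (S : Set Y) : Prop :=
  ∃ f : ℕ → Set Y, (∀ i, IsFsigma (f i)) ∧ S = ⋂ i, f i

/-- F_σδσ set: a countable union of F_σδ sets. -/
def IsFsigmaDeltaSigma {Y : Type*} [TopologicalSpace Y] (S : Set Y) : Prop :=
  ∃ f : ℕ → Set Y, (∀ i, IsFsigmaDelta (f i)) ∧ S = ⋃ i, f i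

/-- G_δσ set: a countable union of G_δ sets. -/
def IsGdeltaSigma {Y : Type*} [TopologicalSpace Y] (S : Set Y) : Prop :=
  ∃ f : ℕ → Set Y, (∀ i, IsGδ (f i)) ∧ S = ⋃ i, f i

/-- G_δσδ set: a countable intersection of G_δσ sets. -/
def IsGdeltaSigmaDelta {Y : Type*} [TopologicalSpace Y] (S : Set Y) : Prop :=
  ∃ f : ℕ → Set Y, (∀ i, IsGdeltaSigma (f i)) ∧ S = ⋂ i, f i

/-- A space is of the first category in itself if it is the union of countably many
subsets that are nowhere dense in it. -/
def FirstCategoryInItself (T : Type*) [TopologicalSpace T] : Prop :=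
  ∃ f : ℕ → Set T, (∀ i, IsNowhereDense (f i)) ∧ (⋃ i, f i) = Set.univ

/-- A space is strongly homogeneous if any two nonempty clopen subsets are homeomorphic. -/
def StronglyHomogeneous (T : Type*) [TopologicalSpace T] : Prop :=
  ∀ U V : Set T, IsClopen U → IsClopen V → U.Nonempty → V.Nonempty → Nonempty (↥U ≃ₜ ↥V)

/-- The standard set `P₃` in the Cantor cube `{0,1}^ℕ`. -/
def P3 : Set (ℕ → Bool) :=
  {x | ∀ n : ℕ, ∀ᶠ k in Filter.atTop, x (2 ^ n * (2 * k + 1)) = false}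

/-- The standard set `S₄` in the Cantor cube `{0,1}^ℕ`. -/
def S4 : Set (ℕ → Bool) :=
  {x | ∀ᶠ n in Filter.atTop, ∀ᶠ k in Filter.atTop, x (2 ^ n * (2 * k + 1)) = false}

/-- The standard set `Π₃` in the Hilbert cube `[0,1]^ℕ`. -/
def Pi3 : Set (ℕ → ↥unitInterval) :=
  {x | ∀ n : ℕ, ∀ᶠ m in Filter.atTop, x (2 ^ n * (2 * m + 1)) = 0}

/-- The standard set `Σ₄` in the Hilbert cube `[0,1]^ℕ`. -/
def Sigma4 : Set (ℕ → ↥unitInterval) :=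
  {x | ∃ n₀ : ℕ, ∀ n ≥ n₀, ∀ᶠ m in Filter.atTop, x (2 ^ n * (2 * m + 1)) = 0}

/-- `c₀`: the space of real sequences converging to `0`, as a subspace of `ℝ^ℕ`
with the product topology. -/
def c0 : Set (ℕ → ℝ) := {x | Filter.Tendsto x Filter.atTop (nhds 0)}

namespace S4Aux


def g : ℕ × ℕ → ℕ
  | (0, 0) => 0
  | (0, k+1) => 2*k+1
  | (n+1, k) => 2^(n+1)*(2*k+1)

lemma pow_mul_odd_inj : ∀ (a b k j : ℕ), 2^a*(2*k+1) = 2^b*(2*j+1) → a = b ∧ k = j := by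
  intro a
  induction a with
  | zero =>
    intro b k j h
    cases b with
    | zero => simp at h; omega
    | succ b =>
      have h2 : 2^(b+1)*(2*j+1) = 2*(2^b*(2*j+1)) := by ring
      simp only [pow_zero, one_mul] at h
      omega
  | succ a ih =>
    intro b k j h
    cases b with
    | zero =>
      have h2 : 2^(a+1)*(2*k+1) = 2*(2^a*(2*k+1)) := by ring
      simp only [pow_zero, one_mul] at h
      omega
    | succ b =>
      have e1 : 2^(a+1)*(2*k+1) = 2*(2^a*(2*k+1)) := by ring
      have e2 : 2^(b+1)*(2*j+1) = 2*(2^b*(2*j+1)) := by ring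
      have h2 : 2^a*(2*k+1) = 2^b*(2*j+1) := by omega
      obtain ⟨h1, h2⟩ := ih b k j h2
      exact ⟨by omega, h2⟩

lemma g_inj : Function.Injective g := by
  rintro ⟨n, k⟩ ⟨m, j⟩ h
  match n, k, m, j with
  | 0, 0, 0, 0 => rfl
  | 0, 0, 0, j+1 => simp only [g] at h; omega
  | 0, 0, m+1, j =>
    exfalso
    have h2 : 2^(m+1)*(2*j+1) = 2*(2^m*(2*j+1)) := by ring
    have hp : 0 < 2^m*(2*j+1) := by positivity
    simp only [g] at h; omega
  | 0, k+1, 0, 0 => simp only [g] at h; omega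
  | 0, k+1, 0, j+1 => simp only [g] at h; simp; omega
  | 0, k+1, m+1, j =>
    exfalso
    have h2 : 2^(m+1)*(2*j+1) = 2*(2^m*(2*j+1)) := by ring
    simp only [g] at h; omega
  | n+1, k, 0, 0 =>
    exfalso
    have h2 : 2^(n+1)*(2*k+1) = 2*(2^n*(2*k+1)) := by ring
    have hp : 0 < 2^n*(2*k+1) := by positivity
    simp only [g] at h; omega
  | n+1, k, 0, j+1 =>
    exfalso
    have h2 : 2^(n+1)*(2*k+1) = 2*(2^n*(2*k+1)) := by ring
    simp only [g] at h; omega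
  | n+1, k, m+1, j =>
    simp only [g] at h
    obtain ⟨h1, h2⟩ := pow_mul_odd_inj _ _ _ _ h
    have : n = m := by omega
    subst this; subst h2; rfl

lemma g_surj : Function.Surjective g := by
  intro m
  induction m using Nat.strong_induction_on with
  | _ m ih =>
    match m, (by omega : m = 0 ∨ m % 2 = 1 ∨ (m % 2 = 0 ∧ m ≥ 2)) with
    | m, Or.inl h => exact ⟨(0,0), by simp [h, g]⟩
    | m, Or.inr (Or.inl h) =>
      refine ⟨(0, m/2 + 1), ?_⟩
      simp only [g]; omega
    | m, Or.inr (Or.inr ⟨h1, h2⟩) =>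
      obtain ⟨⟨n, k⟩, hnk⟩ := ih (m/2) (by omega)
      have h3 : m = 2 * (m/2) := by omega
      match n, k, hnk with
      | 0, 0, hnk => exfalso; simp only [g] at hnk; omega
      | 0, k+1, hnk =>
        refine ⟨(1, k), ?_⟩
        simp only [g] at hnk ⊢
        rw [h3, ← hnk]; ring
      | n+1, k, hnk =>
        refine ⟨(n+2, k), ?_⟩
        simp only [g] at hnk ⊢
        rw [h3, ← hnk]; ring

noncomputable def gE : ℕ × ℕ ≃ ℕ := Equiv.ofBijective g ⟨g_inj, g_surj⟩

/-- the `ℕ×ℕ`-indexed model of `S4`. -/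
def T : Set (ℕ × ℕ → Bool) := {y | ∀ᶠ n in atTop, ∀ᶠ k in atTop, y (n, k) = false}

noncomputable def Phi : (ℕ × ℕ → Bool) ≃ₜ (ℕ → Bool) where
  toFun y := y ∘ gE.symm
  invFun x := x ∘ gE
  left_inv y := by funext p; simp
  right_inv x := by funext m; simp
  continuous_toFun := continuous_pi fun i => continuous_apply _
  continuous_invFun := continuous_pi fun i => continuous_apply _

lemma Phi_mem (y : ℕ × ℕ → Bool) : Phi y ∈ S4 ↔ y ∈ T := by
  have key : ∀ n k, Phi y (2^(n+1)*(2*(k:ℕ)+1)) = y (n+1, k) := by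
    intro n k
    show y (gE.symm (2^(n+1)*(2*k+1))) = y (n+1, k)
    have : (2:ℕ)^(n+1)*(2*k+1) = gE (n+1, k) := rfl
    rw [this, Equiv.symm_apply_apply]
  constructor
  · rintro h
    rw [S4, mem_setOf_eq, eventually_atTop] at h
    obtain ⟨a, ha⟩ := h
    rw [T, mem_setOf_eq, eventually_atTop]
    refine ⟨a + 1, fun b hb => ?_⟩
    obtain ⟨m, rfl⟩ : ∃ m, b = m + 1 := ⟨b - 1, by omega⟩
    have := ha (m+1) (by omega)
    rw [eventually_atTop] at this ⊢
    obtain ⟨c, hc⟩ := this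
    exact ⟨c, fun k hk => by rw [← key]; exact hc k hk⟩
  · rintro h
    rw [T, mem_setOf_eq, eventually_atTop] at h
    obtain ⟨a, ha⟩ := h
    rw [S4, mem_setOf_eq, eventually_atTop]
    refine ⟨a + 1, fun b hb => ?_⟩
    obtain ⟨m, rfl⟩ : ∃ m, b = m + 1 := ⟨b - 1, by omega⟩
    have := ha (m+1) (by omega)
    rw [eventually_atTop] at this ⊢
    obtain ⟨c, hc⟩ := this
    exact ⟨c, fun k hk => by rw [key]; exact hc k hk⟩

lemma Phi_image : Phi '' T = S4 := by
  ext x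
  constructor
  · rintro ⟨y, hy, rfl⟩; exact (Phi_mem y).2 hy
  · intro hx
    refine ⟨Phi.symm x, ?_, by simp⟩
    have h2 := Phi_mem (Phi.symm x)
    simp only [Homeomorph.apply_symm_apply] at h2
    exact h2.1 hx

noncomputable def homeoTS4 : ↥T ≃ₜ ↥S4 :=
  (Phi.image T).trans (Homeomorph.setCongr Phi_image)



lemma update_mem_S4 {x : ℕ → Bool} (hx : x ∈ S4) (c : ℕ) (b : Bool) :
    Function.update x c b ∈ S4 := by
  refine hx.mono fun n hn => ?_
  have hne : ∀ᶠ k in atTop, 2^n*(2*k+1) ≠ c := by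
    rw [eventually_atTop]
    refine ⟨c + 1, fun k hk => ?_⟩
    have h1 : 2*k+1 ≤ 2^n*(2*k+1) := Nat.le_mul_of_pos_left _ (by positivity)
    omega
  filter_upwards [hn, hne] with k h1 h2
  rw [Function.update_of_ne h2]
  exact h1

def Epiece (n m : ℕ) : Set ↥S4 := {x | ∀ k ≥ m, x.val (2^n*(2*k+1)) = false}

lemma Epiece_closed (n m : ℕ) : IsClosed (Epiece n m) := by
  have : Epiece n m = Subtype.val ⁻¹' (⋂ (k : ℕ), ⋂ (_ : k ≥ m), {y : ℕ → Bool | y (2^n*(2*k+1)) = false}) := by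
    ext x; simp [Epiece]
  rw [this]
  refine IsClosed.preimage continuous_subtype_val ?_
  refine isClosed_iInter fun k => isClosed_iInter fun _ => ?_
  show IsClosed ((fun y : ℕ → Bool => y (2^n*(2*k+1))) ⁻¹' {false})
  exact (isClosed_discrete {false}).preimage (continuous_apply _)

lemma Epiece_interior (n m : ℕ) : interior (Epiece n m) = ∅ := by
  rw [eq_empty_iff_forall_notMem]
  intro x hx
  rw [mem_interior_iff_mem_nhds] at hx
  set c : ℕ → ℕ := fun j => 2^n*(2*(m+j)+1) with hc
  have hz : ∀ j, Function.update x.val (c j) true ∈ S4 := fun j => update_mem_S4 x.2 _ _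
  set z : ℕ → ↥S4 := fun j => ⟨Function.update x.val (c j) true, hz j⟩ with hzdef
  have htend : Tendsto z atTop (nhds x) := by
    rw [tendsto_subtype_rng, tendsto_pi_nhds]
    intro i
    have : ∀ᶠ j in atTop, (fun j => (z j : ℕ → Bool) i) j = x.val i := by
      rw [eventually_atTop]
      refine ⟨i + 1, fun j hj => ?_⟩
      have hne : c j ≠ i := by
        have h1 : 2*(m+j)+1 ≤ c j := Nat.le_mul_of_pos_left _ (by positivity)
        omega
      simp only [hzdef]
      exact Function.update_of_ne (Ne.symm hne) _ _
    exact Tendsto.congr' (this.mono fun j hj => hj.symm) tendsto_const_nhds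
  have hev : ∀ᶠ j in atTop, z j ∈ Epiece n m := htend.eventually_mem hx
  obtain ⟨j, hj⟩ := hev.exists
  have h1 : (z j : ℕ → Bool) (c j) = false := hj (m + j) (by omega)
  simp only [hzdef, Function.update_self] at h1
  simp at h1

theorem S4_firstCategory : FirstCategoryInItself ↥S4 := by
  refine ⟨fun i => Epiece (Nat.unpair i).1 (Nat.unpair i).2, fun i => ?_, ?_⟩
  · show interior (closure _) = ∅
    rw [(Epiece_closed _ _).closure_eq]
    exact Epiece_interior _ _
  · rw [eq_univ_iff_forall]
    intro x
    rw [mem_iUnion]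
    obtain ⟨a, ha⟩ := eventually_atTop.mp x.2
    obtain ⟨m, hm⟩ := eventually_atTop.mp (ha a le_rfl)
    exact ⟨Nat.pair a m, by simp [Epiece, Nat.unpair_pair]; exact fun k hk => hm k hk⟩




/-! ### Levels and pieces -/

def L (N : ℕ) : Finset (ℕ × ℕ) := Finset.range N ×ˢ Finset.range N

lemma mem_L {p : ℕ × ℕ} {N : ℕ} : p ∈ L N ↔ p.1 < N ∧ p.2 < N := by
  simp [L, Finset.mem_product]

lemma L_mono {M N : ℕ} (h : M ≤ N) : L M ⊆ L N := by
  intro p hp; rw [mem_L] at hp ⊢; omega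

def Piece (N : ℕ) (t : ℕ × ℕ → Bool) : Set ↥T := {x | ∀ p ∈ L N, x.val p = t p}

lemma Piece_isOpen (N : ℕ) (t : ℕ × ℕ → Bool) : IsOpen (Piece N t) := by
  have h : Piece N t = ⋂ p ∈ (L N : Set (ℕ × ℕ)), ((fun x : ↥T => x.val p) ⁻¹' {t p}) := by
    ext x; simp [Piece]
  rw [h]
  exact (L N).finite_toSet.isOpen_biInter fun p _ =>
    (isOpen_discrete _).preimage ((continuous_apply p).comp continuous_subtype_val)

lemma Piece_congr {N : ℕ} {t t' : ℕ × ℕ → Bool} (h : ∀ p ∈ L N, t p = t' p) :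
    Piece N t = Piece N t' := by
  ext x; constructor <;> intro hx p hp
  · rw [← h p hp]; exact hx p hp
  · rw [h p hp]; exact hx p hp

/-! ### The shift homeomorphism onto a piece -/

def psi (N : ℕ) (t : ℕ × ℕ → Bool) (y : ℕ × ℕ → Bool) : ℕ × ℕ → Bool :=
  fun p => if p.1 < N then (if p.2 < N then t p else y (p.1, p.2 - N)) else y p

def phi (N : ℕ) (z : ℕ × ℕ → Bool) : ℕ × ℕ → Bool :=
  fun p => if p.1 < N then z (p.1, p.2 + N) else z p

lemma phi_psi (N : ℕ) (t y : ℕ × ℕ → Bool) : phi N (psi N t y) = y := by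
  funext p
  obtain ⟨n, k⟩ := p
  simp only [phi, psi]
  by_cases hn : n < N
  · simp only [hn, if_true]
    have h2 : ¬ (k + N < N) := by omega
    simp [h2]
  · simp [hn]

lemma psi_phi {N : ℕ} {t z : ℕ × ℕ → Bool} (hz : ∀ p ∈ L N, z p = t p) :
    psi N t (phi N z) = z := by
  funext p
  obtain ⟨n, k⟩ := p
  simp only [phi, psi]
  by_cases hn : n < N
  · by_cases hk : k < N
    · simp only [hn, hk, if_true]
      exact (hz (n, k) (mem_L.2 ⟨hn, hk⟩)).symm
    · have h2 : k - N + N = k := by omega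
      simp [hn, hk, h2]
  · simp [hn]

lemma psi_row (N : ℕ) (t y : ℕ × ℕ → Bool) (n : ℕ) :
    (∀ᶠ k in atTop, y (n, k) = false) ↔ (∀ᶠ k in atTop, psi N t y (n, k) = false) := by
  by_cases hn : n < N
  · constructor
    · intro h
      rw [eventually_atTop] at h ⊢
      obtain ⟨b, hb⟩ := h
      refine ⟨b + N, fun k hk => ?_⟩
      have h2 : ¬ (k < N) := by omega
      simp only [psi, hn, if_true, h2, if_false]
      exact hb _ (by omega)
    · intro h
      rw [eventually_atTop] at h ⊢
      obtain ⟨b, hb⟩ := h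
      refine ⟨b, fun k hk => ?_⟩
      have h2 : ¬ (k + N < N) := by omega
      have h3 := hb (k + N) (by omega)
      simp only [psi, hn, if_true, h2, if_false] at h3
      simpa using h3
  · constructor <;> intro h <;> refine h.mono fun k hk => ?_ <;> simp only [psi, hn, if_false] at hk ⊢ <;> exact hk

lemma psi_mem_T (N : ℕ) (t y : ℕ × ℕ → Bool) : y ∈ T ↔ psi N t y ∈ T :=
  eventually_congr (Eventually.of_forall fun n => psi_row N t y n)

lemma psi_mem_piece (N : ℕ) (t y : ℕ × ℕ → Bool) : ∀ p ∈ L N, psi N t y p = t p := by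
  intro p hp
  rw [mem_L] at hp
  simp [psi, hp.1, hp.2]

def pieceHomeo (N : ℕ) (t : ℕ × ℕ → Bool) : ↥T ≃ₜ ↥(Piece N t) where
  toFun x := ⟨⟨psi N t x.val, (psi_mem_T N t x.val).1 x.2⟩, fun p hp => psi_mem_piece N t x.val p hp⟩
  invFun u := ⟨phi N u.val.val, by
    have h1 : psi N t (phi N u.val.val) = u.val.val := psi_phi u.2
    have := psi_mem_T N t (phi N u.val.val)
    rw [h1] at this
    exact this.2 u.val.2⟩
  left_inv x := Subtype.ext (phi_psi N t x.val)
  right_inv u := Subtype.ext (Subtype.ext (psi_phi u.2))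
  continuous_toFun := by
    refine Continuous.subtype_mk (Continuous.subtype_mk ?_ _) _
    refine continuous_pi fun p => ?_
    simp only [psi]
    split_ifs with h1 h2
    · exact continuous_const
    · exact (continuous_apply _).comp continuous_subtype_val
    · exact (continuous_apply _).comp continuous_subtype_val
  continuous_invFun := by
    refine Continuous.subtype_mk ?_ _
    refine continuous_pi fun p => ?_
    simp only [phi]
    split_ifs with h1
    · exact (continuous_apply _).comp (continuous_subtype_val.comp continuous_subtype_val)
    · exact (continuous_apply _).comp (continuous_subtype_val.comp continuous_subtype_val)

/-! ### Basic neighborhoods -/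

lemma exists_piece_subset {U : Set ↥T} (hU : IsOpen U) {x : ↥T} (hx : x ∈ U) :
    ∃ N, Piece N x.val ⊆ U := by
  obtain ⟨V, hV, hVU⟩ := isOpen_induced_iff.mp hU
  have hxV : x.val ∈ V := by rw [← hVU] at hx; exact hx
  obtain ⟨I, u, h1, h2⟩ := isOpen_pi_iff.mp hV x.val hxV
  refine ⟨(I.sup fun p => max p.1 p.2) + 1, fun z hz => ?_⟩
  rw [← hVU]
  show z.val ∈ V
  apply h2
  intro p hp
  have hle : max p.1 p.2 ≤ I.sup fun p => max p.1 p.2 := Finset.le_sup (f := fun p : ℕ × ℕ => max p.1 p.2) hp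
  have hpL : p ∈ L ((I.sup fun p => max p.1 p.2) + 1) := mem_L.2 ⟨by omega, by omega⟩
  rw [hz p hpL]
  exact (h1 p hp).2


/-! ### Partition into clopen pieces gives a topological sum -/

lemma partition_homeo {Z : Type} {ι : Type} [TopologicalSpace Z] (P : ι → Set Z)
    (hO : ∀ i, IsOpen (P i)) (hdis : ∀ i j x, x ∈ P i → x ∈ P j → i = j)
    (hcov : ∀ z, ∃ i, z ∈ P i) : Nonempty (Z ≃ₜ (Σ i, ↥(P i))) := by
  classical
  have hbij : Function.Bijective (fun u : Σ i, ↥(P i) => (u.2 : Z)) := by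
    constructor
    · rintro ⟨i, z, hz⟩ ⟨j, w, hw⟩ h
      simp only at h
      subst h
      obtain rfl := hdis i j z hz hw
      rfl
    · intro z
      obtain ⟨i, hi⟩ := hcov z
      exact ⟨⟨i, z, hi⟩, rfl⟩
  let e := Equiv.ofBijective _ hbij
  have hcont : Continuous e := continuous_sigma fun i => continuous_subtype_val
  have hopen : IsOpenMap e := by
    intro O hOp
    have him : ⇑e '' O = ⋃ i, (Subtype.val '' ((Sigma.mk (β := fun i => ↥(P i)) i) ⁻¹' O)) := by
      ext z
      constructor
      · rintro ⟨⟨i, w⟩, hw, rfl⟩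
        exact mem_iUnion.2 ⟨i, ⟨w, hw, rfl⟩⟩
      · intro hz
        rw [mem_iUnion] at hz
        obtain ⟨i, w, hw, rfl⟩ := hz
        exact ⟨⟨i, w⟩, hw, rfl⟩
    rw [him]
    refine isOpen_iUnion fun i => (hO i).isOpenMap_subtype_val _ ?_
    exact (isOpen_sigma_iff.1 hOp) i
  exact ⟨(Equiv.toHomeomorphOfContinuousOpen e hcont hopen).symm⟩

/-- subtype of subtype -/
def subsubHomeo {Z : Type} [TopologicalSpace Z] {U A : Set Z} (h : A ⊆ U) :
    ↥(Subtype.val ⁻¹' A : Set ↥U) ≃ₜ ↥A where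
  toFun w := ⟨w.val.val, w.2⟩
  invFun a := ⟨⟨a.val, h a.2⟩, a.2⟩
  left_inv w := by ext; rfl
  right_inv a := by ext; rfl
  continuous_toFun := Continuous.subtype_mk (continuous_subtype_val.comp continuous_subtype_val) _
  continuous_invFun := Continuous.subtype_mk (Continuous.subtype_mk continuous_subtype_val _) _

/-! ### Sigma gadgets -/

def reindexHomeo {ι κ : Type} (W : Type) [TopologicalSpace W] (e : ι ≃ κ) :
    (Σ _ : ι, W) ≃ₜ (Σ _ : κ, W) where
  toFun u := ⟨e u.1, u.2⟩
  invFun u := ⟨e.symm u.1, u.2⟩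
  left_inv := by rintro ⟨i, w⟩; simp
  right_inv := by rintro ⟨k, w⟩; simp
  continuous_toFun := by
    refine continuous_sigma fun i => ?_
    show Continuous fun a : W => (⟨e i, a⟩ : Σ _ : κ, W)
    exact continuous_sigmaMk (σ := fun _ : κ => W)
  continuous_invFun := by
    refine continuous_sigma fun k => ?_
    show Continuous fun a : W => (⟨e.symm k, a⟩ : Σ _ : ι, W)
    exact continuous_sigmaMk (σ := fun _ : ι => W)

def congrHomeo {ι : Type} {X Y : ι → Type} [∀ i, TopologicalSpace (X i)]
    [∀ i, TopologicalSpace (Y i)] (h : ∀ i, X i ≃ₜ Y i) : (Σ i, X i) ≃ₜ (Σ i, Y i) where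
  toFun u := ⟨u.1, h u.1 u.2⟩
  invFun u := ⟨u.1, (h u.1).symm u.2⟩
  left_inv := by rintro ⟨i, x⟩; simp
  right_inv := by rintro ⟨i, y⟩; simp
  continuous_toFun := by
    refine continuous_sigma fun i => ?_
    show Continuous fun a : X i => (⟨i, h i a⟩ : Σ j, Y j)
    exact continuous_sigmaMk.comp (h i).continuous
  continuous_invFun := by
    refine continuous_sigma fun i => ?_
    show Continuous fun a : Y i => (⟨i, (h i).symm a⟩ : Σ j, X j)
    exact continuous_sigmaMk.comp (h i).symm.continuous

def sigmaSigmaHomeo {ι : Type} (W : Type) [TopologicalSpace W] :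
    (Σ _ : ι, Σ _ : ℕ, W) ≃ₜ (Σ _ : ι × ℕ, W) where
  toFun u := ⟨(u.1, u.2.1), u.2.2⟩
  invFun u := ⟨u.1.1, u.1.2, u.2⟩
  left_inv := by rintro ⟨i, n, w⟩; rfl
  right_inv := by rintro ⟨⟨i, n⟩, w⟩; rfl
  continuous_toFun := by
    refine continuous_sigma fun i => continuous_sigma fun n => ?_
    show Continuous fun a : W => (⟨(i, n), a⟩ : Σ _ : ι × ℕ, W)
    exact continuous_sigmaMk (σ := fun _ : ι × ℕ => W)
  continuous_invFun := by
    refine continuous_sigma fun p => ?_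
    show Continuous fun a : W => (⟨p.1, ⟨p.2, a⟩⟩ : Σ _ : ι, Σ _ : ℕ, W)
    exact (continuous_sigmaMk (σ := fun _ : ι => (Σ _ : ℕ, W))).comp (continuous_sigmaMk (σ := fun _ : ℕ => W))


/-! ### Canonical patterns -/

def trunc (N : ℕ) (t : ℕ × ℕ → Bool) : ℕ × ℕ → Bool := fun p => if p ∈ L N then t p else false

lemma trunc_eq_on {N : ℕ} {t : ℕ × ℕ → Bool} : ∀ p ∈ L N, trunc N t p = t p :=
  fun _ hp => if_pos hp

lemma trunc_canon {N : ℕ} {t : ℕ × ℕ → Bool} : ∀ p ∉ L N, trunc N t p = false :=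
  fun _ hp => if_neg hp

lemma finite_canon (N : ℕ) : {t : ℕ × ℕ → Bool | ∀ p ∉ L N, t p = false}.Finite := by
  classical
  have hsub : {t : ℕ × ℕ → Bool | ∀ p ∉ L N, t p = false} ⊆
      (fun u : (↥(L N)) → Bool => fun p : ℕ × ℕ => if h : p ∈ L N then u ⟨p, h⟩ else false) '' univ := by
    intro t ht
    refine ⟨fun q => t q.val, mem_univ _, ?_⟩
    funext p
    by_cases h : p ∈ L N
    · simp [h]
    · simp only [h, dif_neg, not_false_iff]
      exact (ht p h).symm
  exact (finite_univ.image _).subset hsub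

/-! ### The omega partition of T -/

def Jty : Type := Σ j : ℕ, {t : ℕ × ℕ → Bool //
  (∀ p ∉ L (j+1), t p = false) ∧ (∀ p ∈ L j, t p = true) ∧ ¬(∀ p ∈ L (j+1), t p = true)}

instance : Countable Jty := by
  have : ∀ j : ℕ, Countable {t : ℕ × ℕ → Bool //
      (∀ p ∉ L (j+1), t p = false) ∧ (∀ p ∈ L j, t p = true) ∧ ¬(∀ p ∈ L (j+1), t p = true)} := by
    intro j
    have hf : {t : ℕ × ℕ → Bool | (∀ p ∉ L (j+1), t p = false) ∧ (∀ p ∈ L j, t p = true) ∧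
        ¬(∀ p ∈ L (j+1), t p = true)}.Finite :=
      (finite_canon (j+1)).subset fun t ht => ht.1
    exact @Finite.to_countable _ hf.to_subtype
  exact instCountableSigma

def twit (j : ℕ) : ℕ × ℕ → Bool := fun p => if (p ∈ L (j+1) ∧ p ≠ (j, j)) then true else false

lemma twit_spec (j : ℕ) : (∀ p ∉ L (j+1), twit j p = false) ∧ (∀ p ∈ L j, twit j p = true) ∧
    ¬(∀ p ∈ L (j+1), twit j p = true) := by
  refine ⟨fun p hp => ?_, fun p hp => ?_, fun h => ?_⟩
  · simp [twit, hp]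
  · have h1 : p ∈ L (j+1) := L_mono (Nat.le_succ j) hp
    have h2 : p ≠ (j, j) := by
      rw [mem_L] at hp
      intro he; rw [he] at hp; exact absurd hp.1 (lt_irrefl j)
    simp [twit, h1, h2]
  · have h1 : (j, j) ∈ L (j+1) := mem_L.2 ⟨Nat.lt_succ_self j, Nat.lt_succ_self j⟩
    have h2 := h _ h1
    simp [twit] at h2

instance : Infinite Jty := by
  refine Infinite.of_injective (fun j => (⟨j, ⟨twit j, twit_spec j⟩⟩ : Jty)) ?_
  intro a b h
  exact congrArg Sigma.fst h

lemma T_has_false (x : ↥T) : ∃ M : ℕ, ¬ ∀ p ∈ L (M+1), x.val p = true := by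
  obtain ⟨a, ha⟩ := eventually_atTop.mp x.2
  obtain ⟨b, hb⟩ := eventually_atTop.mp (ha a le_rfl)
  refine ⟨max a b, fun hall => ?_⟩
  have h1 : (a, b) ∈ L (max a b + 1) := mem_L.2 ⟨by omega, by omega⟩
  have h2 := hall _ h1
  rw [hb b le_rfl] at h2
  exact Bool.false_ne_true h2

lemma sigmaNat_homeo_T : Nonempty ((Σ _ : ℕ, ↥T) ≃ₜ ↥T) := by
  classical
  set P : Jty → Set ↥T := fun u => Piece (u.1+1) u.2.val with hP
  have hopen : ∀ u, IsOpen (P u) := fun u => Piece_isOpen _ _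
  have hdisaux : ∀ (j j' : ℕ) t t' ht ht' (x : ↥T), j < j' →
      x ∈ P ⟨j, ⟨t, ht⟩⟩ → x ∈ P ⟨j', ⟨t', ht'⟩⟩ → False := by
    intro j j' t t' ht ht' x hlt hx hx'
    apply ht.2.2
    intro p hp
    have hpj' : p ∈ L j' := L_mono (by omega) hp
    have h1 : x.val p = t' p := hx' p (L_mono (Nat.le_succ j') hpj')
    have h2 : t' p = true := ht'.2.1 p hpj'
    have h3 : x.val p = t p := hx p hp
    rw [← h3, h1, h2]
  have hdis : ∀ u u' (x : ↥T), x ∈ P u → x ∈ P u' → u = u' := by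
    rintro ⟨j, t, ht⟩ ⟨j', t', ht'⟩ x hx hx'
    rcases lt_trichotomy j j' with h | h | h
    · exact absurd (hdisaux j j' t t' ht ht' x h hx hx') not_false
    · subst h
      have hx2 : x ∈ Piece (j+1) t := hx
      have hx2' : x ∈ Piece (j+1) t' := hx'
      have htt : t = t' := by
        funext p
        by_cases hp : p ∈ L (j+1)
        · rw [← hx2 p hp, hx2' p hp]
        · rw [ht.1 p hp, ht'.1 p hp]
      subst htt
      rfl
    · exact absurd (hdisaux j' j t' t ht' ht x h hx' hx) not_false
  have hcov : ∀ x : ↥T, ∃ u, x ∈ P u := by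
    intro x
    have hex := T_has_false x
    have hspec := Nat.find_spec hex
    have hall : ∀ p ∈ L (Nat.find hex), x.val p = true := by
      rcases Nat.eq_zero_or_pos (Nat.find hex) with h | h
      · intro p hp; rw [h] at hp; rw [mem_L] at hp; omega
      · obtain ⟨j', hj'⟩ : ∃ j', Nat.find hex = j' + 1 := ⟨Nat.find hex - 1, by omega⟩
        have hmin := Nat.find_min hex (show j' < Nat.find hex by omega)
        rw [hj']
        exact not_not.mp hmin
    refine ⟨⟨Nat.find hex, ⟨trunc (Nat.find hex + 1) x.val,
      ⟨fun p hp => trunc_canon p hp, fun p hp => ?_, fun h => ?_⟩⟩⟩,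
      fun p hp => (trunc_eq_on p hp).symm⟩
    · rw [trunc_eq_on p (L_mono (Nat.le_succ (Nat.find hex)) hp)]
      exact hall p hp
    · apply hspec
      intro p hp
      rw [← trunc_eq_on (t := x.val) p hp]
      exact h p hp
  obtain ⟨E⟩ := partition_homeo P hopen hdis hcov
  have h2 : (Σ u : Jty, ↥(P u)) ≃ₜ (Σ _ : Jty, ↥T) := congrHomeo fun u => (pieceHomeo _ _).symm
  obtain ⟨dJ⟩ := nonempty_denumerable Jty
  have eJ : Jty ≃ ℕ := @Denumerable.eqv _ dJ
  exact ⟨(reindexHomeo ↥T eJ).symm.trans ((h2.symm.trans E.symm))⟩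

lemma sigma_absorb (ι : Type) [Countable ι] [Nonempty ι] :
    Nonempty ((Σ _ : ι, ↥T) ≃ₜ ↥T) := by
  obtain ⟨B⟩ := sigmaNat_homeo_T
  have e1 : (Σ _ : ι, ↥T) ≃ₜ (Σ _ : ι, Σ _ : ℕ, ↥T) := congrHomeo fun i => B.symm
  have e2 := sigmaSigmaHomeo (ι := ι) ↥T
  have hinf : Infinite (ι × ℕ) := by
    refine Infinite.of_injective (fun n => ((Classical.arbitrary ι), n)) ?_
    intro a b h
    exact (Prod.ext_iff.mp h).2
  obtain ⟨d⟩ := nonempty_denumerable (ι × ℕ)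
  exact ⟨e1.trans (e2.trans ((reindexHomeo ↥T (@Denumerable.eqv _ d)).trans B))⟩

/-! ### Decomposition of open sets -/

def DD (U : Set ↥T) : Set (ℕ × (ℕ × ℕ → Bool)) :=
  {q | (∀ p ∉ L q.1, q.2 p = false) ∧ Piece q.1 q.2 ⊆ U ∧
    ∀ M < q.1, ¬ (Piece M (trunc M q.2) ⊆ U)}

lemma DD_countable (U : Set ↥T) : (DD U).Countable := by
  have hsub : DD U ⊆ ⋃ N : ℕ, (fun t => (N, t)) '' {t | ∀ p ∉ L N, t p = false} := by
    rintro ⟨N, t⟩ hq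
    exact mem_iUnion.2 ⟨N, ⟨t, hq.1, rfl⟩⟩
  exact (Set.countable_iUnion fun N => ((finite_canon N).image _).countable).mono hsub

lemma DD_cover {U : Set ↥T} (hU : IsOpen U) {x : ↥T} (hx : x ∈ U) :
    ∃ q ∈ DD U, x ∈ Piece q.1 q.2 := by
  classical
  have hex : ∃ N, Piece N x.val ⊆ U := exists_piece_subset hU hx
  set N0 := Nat.find hex with hN0
  have hPc : Piece N0 (trunc N0 x.val) = Piece N0 x.val :=
    Piece_congr fun p hp => trunc_eq_on p hp
  refine ⟨(N0, trunc N0 x.val), ⟨fun p hp => trunc_canon p hp, ?_, ?_⟩, ?_⟩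
  · rw [hPc]
    exact Nat.find_spec hex
  · intro M hM hsub
    apply Nat.find_min hex hM
    have htt : trunc M (trunc N0 x.val) = trunc M x.val := by
      funext p
      by_cases hp : p ∈ L M
      · rw [trunc_eq_on p hp, trunc_eq_on p hp, trunc_eq_on p (L_mono (by omega) hp)]
      · rw [trunc_canon p hp, trunc_canon p hp]
    rw [htt] at hsub
    rw [show Piece M (trunc M x.val) = Piece M x.val from Piece_congr fun p hp => trunc_eq_on p hp] at hsub
    exact hsub
  · intro p hp
    exact (trunc_eq_on p hp).symm

lemma DD_disjoint {U : Set ↥T} {q q' : ℕ × (ℕ × ℕ → Bool)} (hq : q ∈ DD U) (hq' : q' ∈ DD U)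
    {x : ↥T} (hx : x ∈ Piece q.1 q.2) (hx' : x ∈ Piece q'.1 q'.2) : q = q' := by
  obtain ⟨N, t⟩ := q
  obtain ⟨N', t'⟩ := q'
  have haux : ∀ (N N' : ℕ) (t t' : ℕ × ℕ → Bool), (N, t) ∈ DD U → (N', t') ∈ DD U →
      x ∈ Piece N t → x ∈ Piece N' t' → N < N' → False := by
    intro N N' t t' hq hq' hx hx' hlt
    have hc : ∀ p ∉ L N, t p = false := hq.1
    apply hq'.2.2 N hlt
    have htt : trunc N t' = t := by
      funext p
      by_cases hp : p ∈ L N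
      · rw [trunc_eq_on p hp, ← hx' p (L_mono (by omega) hp), hx p hp]
      · rw [trunc_canon p hp, hc p hp]
    rw [htt]
    exact hq.2.1
  rcases lt_trichotomy N N' with h | h | h
  · exact absurd (haux N N' t t' hq hq' hx hx' h) not_false
  · subst h
    have hx2 : x ∈ Piece N t := hx
    have hx2' : x ∈ Piece N t' := hx'
    have hc : ∀ p ∉ L N, t p = false := hq.1
    have hc' : ∀ p ∉ L N, t' p = false := hq'.1
    have : t = t' := by
      funext p
      by_cases hp : p ∈ L N
      · rw [← hx2 p hp, hx2' p hp]
      · rw [hc p hp, hc' p hp]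
    rw [this]
  · exact absurd (haux N' N t' t hq' hq hx' hx h) not_false

theorem open_homeo_T (U : Set ↥T) (hU : IsOpen U) (hne : U.Nonempty) :
    Nonempty (↥U ≃ₜ ↥T) := by
  classical
  have hDc : (DD U).Countable := DD_countable U
  have hcnt : Countable ↥(DD U) := hDc.to_subtype
  obtain ⟨x0, hx0⟩ := hne
  obtain ⟨q0, hq0, _⟩ := DD_cover hU hx0
  have hne' : Nonempty ↥(DD U) := ⟨⟨q0, hq0⟩⟩
  set P : ↥(DD U) → Set ↥U := fun d => Subtype.val ⁻¹' (Piece d.val.1 d.val.2) with hPdef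
  have hopen : ∀ d, IsOpen (P d) := fun d => (Piece_isOpen _ _).preimage continuous_subtype_val
  have hdis : ∀ d d' (z : ↥U), z ∈ P d → z ∈ P d' → d = d' := fun d d' z h h' =>
    Subtype.ext (DD_disjoint d.2 d'.2 h h')
  have hcov : ∀ z : ↥U, ∃ d, z ∈ P d := by
    intro z
    obtain ⟨q, hq, hzq⟩ := DD_cover hU z.2
    exact ⟨⟨q, hq⟩, hzq⟩
  obtain ⟨E⟩ := partition_homeo P hopen hdis hcov
  have e2 : (Σ d : ↥(DD U), ↥(P d)) ≃ₜ (Σ _ : ↥(DD U), ↥T) :=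
    congrHomeo fun d => (subsubHomeo d.2.2.1).trans (pieceHomeo _ _).symm
  obtain ⟨e3⟩ := sigma_absorb ↥(DD U)
  exact ⟨E.trans (e2.trans e3)⟩


theorem S4_stronglyHomogeneous : StronglyHomogeneous ↥S4 := by
  intro U V hU hV hUne hVne
  have h : ↥S4 ≃ₜ ↥T := homeoTS4.symm
  have key : ∀ (W : Set ↥S4), IsClopen W → W.Nonempty → Nonempty (↥W ≃ₜ ↥T) := by
    intro W hW hWne
    have h1 : IsOpen (⇑h '' W) := h.isOpen_image.2 hW.isOpen
    have h2 : (⇑h '' W).Nonempty := hWne.image _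
    obtain ⟨e⟩ := open_homeo_T _ h1 h2
    exact ⟨(h.image W).trans e⟩
  obtain ⟨eU⟩ := key U hU hUne
  obtain ⟨eV⟩ := key V hV hVne
  exact ⟨eU.trans eV.symm⟩

end S4Aux

theorem statement16 : FirstCategoryInItself ↥S4 ∧ StronglyHomogeneous ↥S4 :=
  ⟨S4Aux.S4_firstCategory, S4Aux.S4_stronglyHomogeneous⟩
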